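/- Let R be a commutative ring, D_x, D_y : R → R two commuting derivations extended coefficientwise to R[[λ]] and entrywise to matrices, and let (A₀,B₀) be a zero-curvature representation of n×n matrices over R. If there exists an n×n matrix zero-curvature representation (A(λ), B(λ)) over R[[λ]] with constant terms A₀, B₀ that is NOT formally removable (i.e. there is no invertible matrix S(λ) over R[[λ]] with constant term the identity whose gauge transform carries (A(λ),B(λ)) to the constant series (A₀,B₀)), then there exists a cocycle with respect to (A₀,B₀) that is not a coboundary; in other words, a zero-curvature representation whose first horizontal gauge cohomology H¹ is zero cannot be a member of a formal one-parameter family depending on a formally nonremovable parameter. -/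

import Mathlib

/-- A derivation of a commutative ring: an additive map satisfying the Leibniz rule. -/
def IsDeriv {R : Type*} [CommRing R] (D : R → R) : Prop :=
  (∀ a b, D (a + b) = D a + D b) ∧ (∀ a b, D (a * b) = D a * b + a * D b)

/-- The coefficientwise extension of a map `D : R → R` to formal power series `R[[λ]]`. -/
noncomputable def seriesD {R : Type*} [CommRing R] (D : R → R) :
    PowerSeries R → PowerSeries R :=
  fun φ => PowerSeries.mk fun k => D (PowerSeries.coeff (R := R) k φ)

/-- The `k`-th coefficient matrix of a matrix of formal power series. -/
noncomputable def mcoeff {R : Type*} [CommRing R] {n : ℕ} (k : ℕ)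
    (M : Matrix (Fin n) (Fin n) (PowerSeries R)) : Matrix (Fin n) (Fin n) R :=
  M.map (PowerSeries.coeff (R := R) k)

section Aux
variable {R : Type*} [CommRing R] {n : ℕ}

lemma IsDeriv.zero {D : R → R} (hD : IsDeriv D) : D 0 = 0 := by
  have := hD.1 0 0; simpa using this

lemma IsDeriv.one' {D : R → R} (hD : IsDeriv D) : D 1 = 0 := by
  have := hD.2 1 1; simpa using this

/-- `D` as an additive monoid hom. -/
def IsDeriv.hom {D : R → R} (hD : IsDeriv D) : R →+ R :=
  AddMonoidHom.mk' D (fun a b => hD.1 a b)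

lemma IsDeriv.hom_apply {D : R → R} (hD : IsDeriv D) (a : R) : hD.hom a = D a := rfl

lemma IsDeriv.seriesD {D : R → R} (hD : IsDeriv D) : IsDeriv (seriesD D) := by
  constructor
  · intro a b
    ext k
    simp [_root_.seriesD, PowerSeries.coeff_mk, hD.1]
  · intro a b
    ext k
    simp only [_root_.seriesD, PowerSeries.coeff_mk, PowerSeries.coeff_mul, map_add]
    rw [← hD.hom_apply, map_sum, ← Finset.sum_add_distrib]
    refine Finset.sum_congr rfl fun ij _ => ?_
    simp [IsDeriv.hom_apply, hD.2]

lemma seriesD_comm {Dx Dy : R → R} (hcomm : ∀ a, Dx (Dy a) = Dy (Dx a)) (φ : PowerSeries R) :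
    seriesD Dx (seriesD Dy φ) = seriesD Dy (seriesD Dx φ) := by
  ext k; simp [seriesD, hcomm]

variable {S : Type*} [CommRing S]

lemma matD_add {D : S → S} (hD : IsDeriv D) (P Q : Matrix (Fin n) (Fin n) S) :
    (P + Q).map D = P.map D + Q.map D := by
  ext i j; simp [Matrix.map_apply, hD.1]

lemma matD_neg {D : S → S} (hD : IsDeriv D) (P : Matrix (Fin n) (Fin n) S) :
    (-P).map D = -(P.map D) := by
  ext i j
  simp only [Matrix.map_apply, Matrix.neg_apply]
  rw [← hD.hom_apply, ← hD.hom_apply, map_neg]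

lemma matD_sub {D : S → S} (hD : IsDeriv D) (P Q : Matrix (Fin n) (Fin n) S) :
    (P - Q).map D = P.map D - Q.map D := by
  ext i j
  simp only [Matrix.map_apply, Matrix.sub_apply]
  rw [← hD.hom_apply, ← hD.hom_apply, ← hD.hom_apply, map_sub]

lemma matD_mul {D : S → S} (hD : IsDeriv D) (P Q : Matrix (Fin n) (Fin n) S) :
    (P * Q).map D = P.map D * Q + P * Q.map D := by
  ext i j
  simp only [Matrix.map_apply, Matrix.mul_apply, Matrix.add_apply]
  rw [← hD.hom_apply, map_sum, ← Finset.sum_add_distrib]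
  refine Finset.sum_congr rfl fun t _ => ?_
  simp [IsDeriv.hom_apply, hD.2, Matrix.map_apply]

lemma matD_one {D : S → S} (hD : IsDeriv D) :
    (1 : Matrix (Fin n) (Fin n) S).map D = 0 := by
  ext i j
  simp only [Matrix.map_apply, Matrix.one_apply, Matrix.zero_apply]
  split <;> simp [hD.zero, hD.one']

lemma matD_zero {D : S → S} (hD : IsDeriv D) :
    (0 : Matrix (Fin n) (Fin n) S).map D = 0 := by
  ext i j; simp [Matrix.map_apply, hD.zero]

lemma matD_sum {D : S → S} (hD : IsDeriv D) {ι : Type*} (s : Finset ι)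
    (f : ι → Matrix (Fin n) (Fin n) S) :
    (∑ i ∈ s, f i).map D = ∑ i ∈ s, (f i).map D := by
  classical
  induction s using Finset.induction_on with
  | empty => exact matD_zero hD
  | insert _ _ h ih => rw [Finset.sum_insert h, Finset.sum_insert h, matD_add hD, ih]

lemma mcoeff_add (k : ℕ) (P Q : Matrix (Fin n) (Fin n) (PowerSeries R)) :
    mcoeff k (P + Q) = mcoeff k P + mcoeff k Q := by
  ext i j; simp [mcoeff, Matrix.map_apply]

lemma mcoeff_sub (k : ℕ) (P Q : Matrix (Fin n) (Fin n) (PowerSeries R)) :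
    mcoeff k (P - Q) = mcoeff k P - mcoeff k Q := by
  ext i j; simp [mcoeff, Matrix.map_apply]

lemma mcoeff_neg (k : ℕ) (P : Matrix (Fin n) (Fin n) (PowerSeries R)) :
    mcoeff k (-P) = -(mcoeff k P) := by
  ext i j; simp [mcoeff, Matrix.map_apply]

lemma mcoeff_zero (k : ℕ) :
    mcoeff k (0 : Matrix (Fin n) (Fin n) (PowerSeries R)) = 0 := by
  ext i j; simp [mcoeff, Matrix.map_apply]

lemma mcoeff_sum (k : ℕ) {ι : Type*} (s : Finset ι)
    (f : ι → Matrix (Fin n) (Fin n) (PowerSeries R)) :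
    mcoeff k (∑ i ∈ s, f i) = ∑ i ∈ s, mcoeff k (f i) := by
  classical
  induction s using Finset.induction_on with
  | empty => simpa using mcoeff_zero (R := R) (n := n) k
  | insert _ _ h ih => rw [Finset.sum_insert h, Finset.sum_insert h, mcoeff_add, ih]

lemma mcoeff_mul (k : ℕ) (P Q : Matrix (Fin n) (Fin n) (PowerSeries R)) :
    mcoeff k (P * Q) = ∑ ij ∈ Finset.HasAntidiagonal.antidiagonal k, mcoeff ij.1 P * mcoeff ij.2 Q := by
  ext a b
  simp only [mcoeff, Matrix.map_apply, Matrix.mul_apply, Matrix.sum_apply,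
    PowerSeries.coeff_mul, map_sum]
  rw [Finset.sum_comm]

lemma mcoeff_ext {P Q : Matrix (Fin n) (Fin n) (PowerSeries R)}
    (h : ∀ k, mcoeff k P = mcoeff k Q) : P = Q := by
  ext a b k
  have := congrFun (congrFun (h k) a) b
  simpa [mcoeff, Matrix.map_apply] using this

lemma mcoeff_seriesD (k : ℕ) {D : R → R} (P : Matrix (Fin n) (Fin n) (PowerSeries R)) :
    mcoeff k (P.map (seriesD D)) = (mcoeff k P).map D := by
  ext a b; simp [mcoeff, Matrix.map_apply, seriesD]

lemma mcoeff_C_mul (k : ℕ) (M : Matrix (Fin n) (Fin n) R)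
    (P : Matrix (Fin n) (Fin n) (PowerSeries R)) :
    mcoeff k (M.map (PowerSeries.C (R := R)) * P) = M * mcoeff k P := by
  ext a b
  simp [mcoeff, Matrix.map_apply, Matrix.mul_apply, PowerSeries.coeff_C_mul]

lemma mcoeff_mul_C (k : ℕ) (P : Matrix (Fin n) (Fin n) (PowerSeries R))
    (M : Matrix (Fin n) (Fin n) R) :
    mcoeff k (P * M.map (PowerSeries.C (R := R))) = mcoeff k P * M := by
  ext a b
  simp [mcoeff, Matrix.map_apply, Matrix.mul_apply, PowerSeries.coeff_mul_C]

/-- entrywise monomial embedding -/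
noncomputable def mmon (m : ℕ) (M : Matrix (Fin n) (Fin n) R) :
    Matrix (Fin n) (Fin n) (PowerSeries R) :=
  M.map (PowerSeries.monomial (R := R) m)

lemma mcoeff_mmon (k m : ℕ) (M : Matrix (Fin n) (Fin n) R) :
    mcoeff k (mmon m M) = if k = m then M else 0 := by
  ext a b
  simp only [mcoeff, mmon, Matrix.map_apply, PowerSeries.coeff_monomial]
  split <;> simp [Matrix.map_apply]

lemma mmon_seriesD (m : ℕ) {D : R → R} (hD : IsDeriv D) (M : Matrix (Fin n) (Fin n) R) :
    (mmon m M).map (seriesD D) = mmon m (M.map D) := by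
  ext a b k
  simp only [mmon, Matrix.map_apply, seriesD, PowerSeries.coeff_mk, PowerSeries.coeff_monomial]
  split <;> simp [hD.zero]

lemma mapC_seriesD {D : R → R} (hD : IsDeriv D) (M : Matrix (Fin n) (Fin n) R) :
    (M.map (PowerSeries.C (R := R))).map (seriesD D) = (M.map D).map (PowerSeries.C (R := R)) := by
  ext a b k
  simp only [Matrix.map_apply, seriesD, PowerSeries.coeff_mk, PowerSeries.coeff_C]
  split <;> simp [hD.zero]

lemma mapC_mul (M N : Matrix (Fin n) (Fin n) R) :
    (M * N).map (PowerSeries.C (R := R)) = M.map (PowerSeries.C (R := R)) * N.map (PowerSeries.C (R := R)) := by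
  simp [Matrix.map_mul]

lemma mapC_sub (M N : Matrix (Fin n) (Fin n) R) :
    (M - N).map (PowerSeries.C (R := R)) = M.map (PowerSeries.C (R := R)) - N.map (PowerSeries.C (R := R)) := by
  ext a b; simp [Matrix.map_apply]

lemma mapC_add (M N : Matrix (Fin n) (Fin n) R) :
    (M + N).map (PowerSeries.C (R := R)) = M.map (PowerSeries.C (R := R)) + N.map (PowerSeries.C (R := R)) := by
  ext a b; simp [Matrix.map_apply]

lemma mapC_zero : ((0 : Matrix (Fin n) (Fin n) R)).map (PowerSeries.C (R := R)) = 0 := by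
  ext a b; simp [Matrix.map_apply]

end Aux

lemma key_identity {M : Type*} [Ring M] (dx dy : M → M)
    (hdxa : ∀ a b : M, dx (a + b) = dx a + dx b)
    (hdxm : ∀ a b : M, dx (a * b) = dx a * b + a * dx b)
    (hdya : ∀ a b : M, dy (a + b) = dy a + dy b)
    (hdym : ∀ a b : M, dy (a * b) = dy a * b + a * dy b)
    (S A B Ab Bb : M)
    (hc : dx (dy S) = dy (dx S))
    (hz : dy A - dx B + (A * B - B * A) = 0)
    (hz0 : dy Ab - dx Bb + (Ab * Bb - Bb * Ab) = 0) :
    dy (dx S - Ab * S + S * A) - Bb * (dx S - Ab * S + S * A) + (dx S - Ab * S + S * A) * B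
    = dx (dy S - Bb * S + S * B) - Ab * (dy S - Bb * S + S * B) + (dy S - Bb * S + S * B) * A := by
  have dx0 : dx 0 = 0 := by have := hdxa 0 0; simpa using this
  have dy0 : dy 0 = 0 := by have := hdya 0 0; simpa using this
  have dxneg : ∀ a, dx (-a) = -dx a := by
    intro a
    have h := hdxa a (-a)
    simp only [add_neg_cancel, dx0] at h
    exact eq_neg_of_add_eq_zero_right h.symm
  have dyneg : ∀ a, dy (-a) = -dy a := by
    intro a
    have h := hdya a (-a)
    simp only [add_neg_cancel, dy0] at h
    exact eq_neg_of_add_eq_zero_right h.symm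
  have dxsub : ∀ a b, dx (a - b) = dx a - dx b := by
    intro a b; rw [sub_eq_add_neg, hdxa, dxneg, sub_eq_add_neg]
  have dysub : ∀ a b, dy (a - b) = dy a - dy b := by
    intro a b; rw [sub_eq_add_neg, hdya, dyneg, sub_eq_add_neg]
  have e1 : dy A = dx B - (A * B - B * A) := by
    rw [← sub_eq_zero, show dy A - (dx B - (A * B - B * A)) =
      dy A - dx B + (A * B - B * A) from by abel, hz]
  have e0 : dy Ab = dx Bb - (Ab * Bb - Bb * Ab) := by
    rw [← sub_eq_zero, show dy Ab - (dx Bb - (Ab * Bb - Bb * Ab)) =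
      dy Ab - dx Bb + (Ab * Bb - Bb * Ab) from by abel, hz0]
  simp only [hdya, hdxa, dysub, dxsub, hdym, hdxm, hc, e1, e0]
  noncomm_ring

noncomputable def Sstage {M : Type*} [Ring M] (pick : M → M → M) (Ac Bc : ℕ → M) :
    ℕ → ℕ → M
  | 0, m => if m = 0 then 1 else 0
  | (k+1), m =>
    if m = k + 1 then
      pick (-(∑ i ∈ Finset.range (k+1), Sstage pick Ac Bc k i * Ac (k+1-i)))
           (-(∑ i ∈ Finset.range (k+1), Sstage pick Ac Bc k i * Bc (k+1-i)))
    else Sstage pick Ac Bc k m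

noncomputable def Ssq {M : Type*} [Ring M] (pick : M → M → M) (Ac Bc : ℕ → M) (k : ℕ) : M :=
  Sstage pick Ac Bc k k

lemma Sstage_stable {M : Type*} [Ring M] (pick : M → M → M) (Ac Bc : ℕ → M) :
    ∀ k m, m ≤ k → Sstage pick Ac Bc k m = Ssq pick Ac Bc m := by
  intro k
  induction k with
  | zero => intro m hm; interval_cases m; rfl
  | succ k ih =>
    intro m hm
    rcases Nat.lt_or_ge m (k+1) with h | h
    · rw [show Sstage pick Ac Bc (k+1) m = Sstage pick Ac Bc k m from by
        rw [Sstage]; simp [Nat.ne_of_lt h], ih m (Nat.lt_succ_iff.mp h)]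
    · have : m = k + 1 := le_antisymm hm h
      subst this; rfl

lemma Ssq_zero {M : Type*} [Ring M] (pick : M → M → M) (Ac Bc : ℕ → M) :
    Ssq pick Ac Bc 0 = 1 := rfl

lemma Ssq_succ {M : Type*} [Ring M] (pick : M → M → M) (Ac Bc : ℕ → M) (k : ℕ) :
    Ssq pick Ac Bc (k+1) =
      pick (-(∑ i ∈ Finset.range (k+1), Ssq pick Ac Bc i * Ac (k+1-i)))
           (-(∑ i ∈ Finset.range (k+1), Ssq pick Ac Bc i * Bc (k+1-i))) := by
  rw [Ssq, Sstage]
  simp only [if_pos rfl]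
  have h1 : ∑ i ∈ Finset.range (k+1), Sstage pick Ac Bc k i * Ac (k+1-i)
      = ∑ i ∈ Finset.range (k+1), Ssq pick Ac Bc i * Ac (k+1-i) :=
    Finset.sum_congr rfl fun i hi => by
      rw [Sstage_stable pick Ac Bc k i (Nat.lt_succ_iff.mp (Finset.mem_range.mp hi))]
  have h2 : ∑ i ∈ Finset.range (k+1), Sstage pick Ac Bc k i * Bc (k+1-i)
      = ∑ i ∈ Finset.range (k+1), Ssq pick Ac Bc i * Bc (k+1-i) :=
    Finset.sum_congr rfl fun i hi => by
      rw [Sstage_stable pick Ac Bc k i (Nat.lt_succ_iff.mp (Finset.mem_range.mp hi))]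
  rw [h1, h2]
  simp

open Classical in
/-- The choice of a primitive for a coboundary pair. -/
noncomputable def pick0 {R : Type*} [CommRing R] {n : ℕ} (Dx Dy : R → R)
    (A₀ B₀ U V : Matrix (Fin n) (Fin n) R) : Matrix (Fin n) (Fin n) R :=
  if h : ∃ S : Matrix (Fin n) (Fin n) R,
      U = S.map Dx - (A₀ * S - S * A₀) ∧ V = S.map Dy - (B₀ * S - S * B₀) then
    h.choose else 0

lemma pick0_spec {R : Type*} [CommRing R] {n : ℕ} (Dx Dy : R → R)
    (A₀ B₀ U V : Matrix (Fin n) (Fin n) R)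
    (h : ∃ S : Matrix (Fin n) (Fin n) R,
      U = S.map Dx - (A₀ * S - S * A₀) ∧ V = S.map Dy - (B₀ * S - S * B₀)) :
    U = (pick0 Dx Dy A₀ B₀ U V).map Dx -
        (A₀ * pick0 Dx Dy A₀ B₀ U V - pick0 Dx Dy A₀ B₀ U V * A₀) ∧
    V = (pick0 Dx Dy A₀ B₀ U V).map Dy -
        (B₀ * pick0 Dx Dy A₀ B₀ U V - pick0 Dx Dy A₀ B₀ U V * B₀) := by
  unfold pick0
  rw [dif_pos h]
  exact h.choose_spec

theorem nonremovable_parameter_gives_nonzero_H1 {R : Type*} [CommRing R] {n : ℕ}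
    (Dx Dy : R → R) (hDx : IsDeriv Dx) (hDy : IsDeriv Dy)
    (hcomm : ∀ a, Dx (Dy a) = Dy (Dx a))
    (A₀ B₀ : Matrix (Fin n) (Fin n) R)
    (hzcr : A₀.map Dy - B₀.map Dx + (A₀ * B₀ - B₀ * A₀) = 0)
    (hex : ∃ A B : Matrix (Fin n) (Fin n) (PowerSeries R),
      A.map (seriesD Dy) - B.map (seriesD Dx) + (A * B - B * A) = 0 ∧
      mcoeff 0 A = A₀ ∧ mcoeff 0 B = B₀ ∧
      ¬ ∃ S T : Matrix (Fin n) (Fin n) (PowerSeries R),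
        mcoeff 0 S = 1 ∧ S * T = 1 ∧ T * S = 1 ∧
        S.map (seriesD Dx) * T + S * A * T = A₀.map (PowerSeries.C (R := R)) ∧
        S.map (seriesD Dy) * T + S * B * T = B₀.map (PowerSeries.C (R := R))) :
    ∃ U V : Matrix (Fin n) (Fin n) R,
      U.map Dy - (B₀ * U - U * B₀) = V.map Dx - (A₀ * V - V * A₀) ∧
      ¬ ∃ S : Matrix (Fin n) (Fin n) R,
        U = S.map Dx - (A₀ * S - S * A₀) ∧ V = S.map Dy - (B₀ * S - S * B₀) := by
  classical
  by_contra hcon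
  push_neg at hcon
  obtain ⟨A, B, hAB, hA0, hB0, hnrem⟩ := hex
  set Ac : ℕ → Matrix (Fin n) (Fin n) R := fun k => mcoeff k A with hAc
  set Bc : ℕ → Matrix (Fin n) (Fin n) R := fun k => mcoeff k B with hBc
  have hAc' : ∀ j, Ac j = mcoeff j A := fun j => by rw [hAc]
  have hBc' : ∀ j, Bc j = mcoeff j B := fun j => by rw [hBc]
  set pk : Matrix (Fin n) (Fin n) R → Matrix (Fin n) (Fin n) R → Matrix (Fin n) (Fin n) R :=
    pick0 Dx Dy A₀ B₀ with hpk
  set Sq : ℕ → Matrix (Fin n) (Fin n) R := Ssq pk Ac Bc with hSqdef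
  have hSq0 : Sq 0 = 1 := by rw [hSqdef]; rfl
  have hSq_succ : ∀ k, Sq (k+1) =
      pk (-(∑ i ∈ Finset.range (k+1), Sq i * Ac (k+1-i)))
         (-(∑ i ∈ Finset.range (k+1), Sq i * Bc (k+1-i))) := by
    intro k; rw [hSqdef]; exact Ssq_succ pk Ac Bc k
  have hDxs : IsDeriv (seriesD Dx) := hDx.seriesD
  have hDys : IsDeriv (seriesD Dy) := hDy.seriesD
  have hzcrC : (A₀.map (PowerSeries.C (R := R))).map (seriesD Dy)
      - (B₀.map (PowerSeries.C (R := R))).map (seriesD Dx)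
      + (A₀.map (PowerSeries.C (R := R)) * B₀.map (PowerSeries.C (R := R))
        - B₀.map (PowerSeries.C (R := R)) * A₀.map (PowerSeries.C (R := R))) = 0 := by
    rw [mapC_seriesD hDy, mapC_seriesD hDx, ← mapC_mul, ← mapC_mul, ← mapC_sub, ← mapC_sub,
      ← mapC_add, hzcr, mapC_zero]
  have hAc0 : Ac 0 = A₀ := by rw [hAc']; exact hA0
  have hBc0 : Bc 0 = B₀ := by rw [hBc']; exact hB0
  -- main induction: the gauge-removal equations at every order
  have hS : ∀ k : ℕ,
      (Sq k).map Dx - (A₀ * Sq k - Sq k * A₀)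
        = -(∑ i ∈ Finset.range k, Sq i * Ac (k - i)) ∧
      (Sq k).map Dy - (B₀ * Sq k - Sq k * B₀)
        = -(∑ i ∈ Finset.range k, Sq i * Bc (k - i)) := by
    intro k
    induction k using Nat.strong_induction_on with
    | _ k IH =>
      cases k with
      | zero =>
        constructor <;>
        · rw [hSq0]
          simp [matD_one hDx, matD_one hDy]
      | succ k =>
        set P : Matrix (Fin n) (Fin n) (PowerSeries R) :=
          ∑ m ∈ Finset.range (k+1), mmon m (Sq m) with hP
        clear_value P
        have hPcoeff : ∀ m, mcoeff m P = if m ≤ k then Sq m else 0 := by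
          intro m
          rw [hP, mcoeff_sum]
          rw [Finset.sum_congr rfl (fun j _ => mcoeff_mmon m j (Sq j))]
          rw [Finset.sum_ite_eq (Finset.range (k+1)) m Sq]
          simp [Nat.lt_succ_iff]
        have hPA : ∀ m, mcoeff m (P * A) =
            ∑ i ∈ Finset.range (m+1), (if i ≤ k then Sq i else 0) * Ac (m - i) := by
          intro m
          rw [mcoeff_mul, Finset.Nat.sum_antidiagonal_eq_sum_range_succ_mk]
          exact Finset.sum_congr rfl fun i _ => by rw [hPcoeff i, ← hAc' (m - i)]
        have hPB : ∀ m, mcoeff m (P * B) =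
            ∑ i ∈ Finset.range (m+1), (if i ≤ k then Sq i else 0) * Bc (m - i) := by
          intro m
          rw [mcoeff_mul, Finset.Nat.sum_antidiagonal_eq_sum_range_succ_mk]
          exact Finset.sum_congr rfl fun i _ => by rw [hPcoeff i, ← hBc' (m - i)]
        set Φ : Matrix (Fin n) (Fin n) (PowerSeries R) :=
          P.map (seriesD Dx) - (A₀.map (PowerSeries.C (R := R))) * P + P * A with hΦ
        set Ψ : Matrix (Fin n) (Fin n) (PowerSeries R) :=
          P.map (seriesD Dy) - (B₀.map (PowerSeries.C (R := R))) * P + P * B with hΨ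
        clear_value Φ Ψ
        have hΦlow : ∀ m, m ≤ k → mcoeff m Φ = 0 := by
          intro m hm
          rw [hΦ, mcoeff_add, mcoeff_sub, mcoeff_seriesD, mcoeff_C_mul, hPA, hPcoeff,
            if_pos hm]
          have hsum : ∑ i ∈ Finset.range (m+1), (if i ≤ k then Sq i else 0) * Ac (m - i)
              = (∑ i ∈ Finset.range m, Sq i * Ac (m - i)) + Sq m * A₀ := by
            rw [Finset.sum_range_succ, if_pos hm, Nat.sub_self, hAc0]
            congr 1
            refine Finset.sum_congr rfl fun i hi => ?_
            rw [if_pos (le_trans (Nat.le_of_lt (Finset.mem_range.mp hi)) hm)]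
          rw [hsum]
          have h2 : (Sq m).map Dx
              = -(∑ i ∈ Finset.range m, Sq i * Ac (m - i)) + (A₀ * Sq m - Sq m * A₀) :=
            sub_eq_iff_eq_add.mp ((IH m (Nat.lt_succ_of_le hm)).1)
          rw [h2]; abel
        have hΨlow : ∀ m, m ≤ k → mcoeff m Ψ = 0 := by
          intro m hm
          rw [hΨ, mcoeff_add, mcoeff_sub, mcoeff_seriesD, mcoeff_C_mul, hPB, hPcoeff,
            if_pos hm]
          have hsum : ∑ i ∈ Finset.range (m+1), (if i ≤ k then Sq i else 0) * Bc (m - i)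
              = (∑ i ∈ Finset.range m, Sq i * Bc (m - i)) + Sq m * B₀ := by
            rw [Finset.sum_range_succ, if_pos hm, Nat.sub_self, hBc0]
            congr 1
            refine Finset.sum_congr rfl fun i hi => ?_
            rw [if_pos (le_trans (Nat.le_of_lt (Finset.mem_range.mp hi)) hm)]
          rw [hsum]
          have h2 : (Sq m).map Dy
              = -(∑ i ∈ Finset.range m, Sq i * Bc (m - i)) + (B₀ * Sq m - Sq m * B₀) :=
            sub_eq_iff_eq_add.mp ((IH m (Nat.lt_succ_of_le hm)).2)
          rw [h2]; abel
        have hΦtop : mcoeff (k+1) Φ = ∑ i ∈ Finset.range (k+1), Sq i * Ac (k+1-i) := by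
          rw [hΦ, mcoeff_add, mcoeff_sub, mcoeff_seriesD, mcoeff_C_mul, hPA, hPcoeff,
            if_neg (by omega), matD_zero hDx, mul_zero, sub_zero, zero_add,
            Finset.sum_range_succ, if_neg (by omega), zero_mul, add_zero]
          refine Finset.sum_congr rfl fun i hi => ?_
          rw [if_pos (Nat.lt_succ_iff.mp (Finset.mem_range.mp hi))]
        have hΨtop : mcoeff (k+1) Ψ = ∑ i ∈ Finset.range (k+1), Sq i * Bc (k+1-i) := by
          rw [hΨ, mcoeff_add, mcoeff_sub, mcoeff_seriesD, mcoeff_C_mul, hPB, hPcoeff,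
            if_neg (by omega), matD_zero hDy, mul_zero, sub_zero, zero_add,
            Finset.sum_range_succ, if_neg (by omega), zero_mul, add_zero]
          refine Finset.sum_congr rfl fun i hi => ?_
          rw [if_pos (Nat.lt_succ_iff.mp (Finset.mem_range.mp hi))]
        -- the key curvature identity for the truncation
        have hcP : (P.map (seriesD Dy)).map (seriesD Dx)
            = (P.map (seriesD Dx)).map (seriesD Dy) := by
          ext a b k'
          simp only [Matrix.map_apply]
          rw [seriesD_comm hcomm (P a b)]
        have hkey := key_identity (fun Q => Q.map (seriesD Dx)) (fun Q => Q.map (seriesD Dy))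
          (matD_add hDxs) (matD_mul hDxs) (matD_add hDys) (matD_mul hDys)
          P A B (A₀.map (PowerSeries.C (R := R))) (B₀.map (PowerSeries.C (R := R)))
          hcP hAB hzcrC
        rw [← hΦ, ← hΨ] at hkey
        have hcoeff := congrArg (mcoeff (k+1)) hkey
        have hΦB : mcoeff (k+1) (Φ * B) = mcoeff (k+1) Φ * B₀ := by
          rw [mcoeff_mul, Finset.Nat.sum_antidiagonal_eq_sum_range_succ_mk,
            Finset.sum_range_succ]
          rw [Finset.sum_eq_zero fun i hi => by
            rw [hΦlow i (Nat.lt_succ_iff.mp (Finset.mem_range.mp hi))]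
            exact zero_mul _]
          rw [zero_add, Nat.sub_self, hB0]
        have hΨA : mcoeff (k+1) (Ψ * A) = mcoeff (k+1) Ψ * A₀ := by
          rw [mcoeff_mul, Finset.Nat.sum_antidiagonal_eq_sum_range_succ_mk,
            Finset.sum_range_succ]
          rw [Finset.sum_eq_zero fun i hi => by
            rw [hΨlow i (Nat.lt_succ_iff.mp (Finset.mem_range.mp hi))]
            exact zero_mul _]
          rw [zero_add, Nat.sub_self, hA0]
        rw [mcoeff_add, mcoeff_sub, mcoeff_seriesD, mcoeff_C_mul,
          mcoeff_add, mcoeff_sub, mcoeff_seriesD, mcoeff_C_mul,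
          hΦB, hΨA, hΦtop, hΨtop] at hcoeff
        -- hcoeff is now a matrix identity over R at order k+1
        have hcoc :
            (-(∑ i ∈ Finset.range (k+1), Sq i * Ac (k+1-i))).map Dy
              - (B₀ * (-(∑ i ∈ Finset.range (k+1), Sq i * Ac (k+1-i)))
                - (-(∑ i ∈ Finset.range (k+1), Sq i * Ac (k+1-i))) * B₀)
            = (-(∑ i ∈ Finset.range (k+1), Sq i * Bc (k+1-i))).map Dx
              - (A₀ * (-(∑ i ∈ Finset.range (k+1), Sq i * Bc (k+1-i)))
                - (-(∑ i ∈ Finset.range (k+1), Sq i * Bc (k+1-i))) * A₀) := by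
          rw [matD_neg hDy, matD_neg hDx]
          rw [show ∀ X : Matrix (Fin n) (Fin n) R, ∀ Y,
            -((X : Matrix (Fin n) (Fin n) R).map Dy) - (B₀ * (-X) - (-X) * Y)
              = -(X.map Dy - B₀ * X + X * Y) from fun X Y => by noncomm_ring]
          rw [show ∀ X : Matrix (Fin n) (Fin n) R, ∀ Y,
            -((X : Matrix (Fin n) (Fin n) R).map Dx) - (A₀ * (-X) - (-X) * Y)
              = -(X.map Dx - A₀ * X + X * Y) from fun X Y => by noncomm_ring]
          rw [hcoeff]
        obtain hps := pick0_spec Dx Dy A₀ B₀ _ _ (hcon _ _ hcoc)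
        constructor
        · rw [hSq_succ k, hpk]
          exact hps.1.symm
        · rw [hSq_succ k, hpk]
          exact hps.2.symm
  -- assemble the full gauge transformation as a power-series matrix
  set SS : Matrix (Fin n) (Fin n) (PowerSeries R) :=
    Matrix.of (fun a b => PowerSeries.mk fun k => Sq k a b) with hSS
  have hmSS : ∀ k, mcoeff k SS = Sq k := by
    intro k; ext a b
    simp [hSS, mcoeff, Matrix.map_apply]
  have hGx : SS.map (seriesD Dx) + SS * A = A₀.map (PowerSeries.C (R := R)) * SS := by
    apply mcoeff_ext
    intro m
    rw [mcoeff_add, mcoeff_seriesD, mcoeff_C_mul, hmSS, mcoeff_mul,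
      Finset.Nat.sum_antidiagonal_eq_sum_range_succ_mk]
    rw [Finset.sum_congr rfl fun i _ => by rw [hmSS i, ← hAc' (m - i)]]
    rw [Finset.sum_range_succ, Nat.sub_self, hAc0]
    have h2 : (Sq m).map Dx
        = -(∑ i ∈ Finset.range m, Sq i * Ac (m - i)) + (A₀ * Sq m - Sq m * A₀) :=
      sub_eq_iff_eq_add.mp ((hS m).1)
    rw [h2]; abel
  have hGy : SS.map (seriesD Dy) + SS * B = B₀.map (PowerSeries.C (R := R)) * SS := by
    apply mcoeff_ext
    intro m
    rw [mcoeff_add, mcoeff_seriesD, mcoeff_C_mul, hmSS, mcoeff_mul,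
      Finset.Nat.sum_antidiagonal_eq_sum_range_succ_mk]
    rw [Finset.sum_congr rfl fun i _ => by rw [hmSS i, ← hBc' (m - i)]]
    rw [Finset.sum_range_succ, Nat.sub_self, hBc0]
    have h2 : (Sq m).map Dy
        = -(∑ i ∈ Finset.range m, Sq i * Bc (m - i)) + (B₀ * Sq m - Sq m * B₀) :=
      sub_eq_iff_eq_add.mp ((hS m).2)
    rw [h2]; abel
  -- SS is invertible
  have hmSS0 : mcoeff 0 SS = 1 := by rw [hmSS 0, hSq0]
  have hconst : PowerSeries.constantCoeff (R := R) SS.det = 1 := by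
    have h1 : SS.map (PowerSeries.constantCoeff (R := R)) = (1 : Matrix (Fin n) (Fin n) R) := by
      rw [← hmSS0]
      ext a b
      simp [mcoeff, Matrix.map_apply, PowerSeries.coeff_zero_eq_constantCoeff]
    calc (PowerSeries.constantCoeff (R := R)) SS.det
        = (SS.map (PowerSeries.constantCoeff (R := R))).det := RingHom.map_det _ _
      _ = (1 : Matrix (Fin n) (Fin n) R).det := by rw [h1]
      _ = 1 := Matrix.det_one
  have hunit : IsUnit SS := by
    rw [Matrix.isUnit_iff_isUnit_det]
    rw [PowerSeries.isUnit_iff_constantCoeff, hconst]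
    exact isUnit_one
  obtain ⟨u, hu⟩ := hunit
  set T : Matrix (Fin n) (Fin n) (PowerSeries R) := ↑u⁻¹ with hT
  have hST : SS * T = 1 := by rw [hT, ← hu]; exact u.mul_inv
  have hTS : T * SS = 1 := by rw [hT, ← hu]; exact u.inv_mul
  refine hnrem ⟨SS, T, hmSS0, hST, hTS, ?_, ?_⟩
  · have h : (SS.map (seriesD Dx) + SS * A) * T
        = A₀.map (PowerSeries.C (R := R)) * (SS * T) := by
      rw [hGx, mul_assoc]
    rw [add_mul, hST, mul_one] at h
    exact h
  · have h : (SS.map (seriesD Dy) + SS * B) * T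
        = B₀.map (PowerSeries.C (R := R)) * (SS * T) := by
      rw [hGy, mul_assoc]
    rw [add_mul, hST, mul_one] at h
    exact h
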